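/- arXiv:2004.14841 — 3 statements merged into one kernel-verified Lean document; each statement's English description precedes it below -/
import Mathlib

section
/- Let (f_n) be a sequence of convex functions from ℝ^d to ℝ converging pointwise to a function f on ℝ^d. Then the convergence is uniform on every compact subset K of ℝ^d. -/
open Filter Finset

lemma sum_prod_bool {d : ℕ} (F : Fin d → Bool → ℝ) :
    ∑ s : Fin d → Bool, ∏ i, F i (s i) = ∏ i, (F i true + F i false) := by
  have := (Finset.prod_univ_sum (fun _ : Fin d => (Finset.univ : Finset Bool)) F).symm
  rw [Fintype.piFinset_univ] at this
  rw [this]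
  exact Finset.prod_congr rfl fun i _ => by rw [Fintype.sum_bool]

lemma cube_combo (d : ℕ) (r : ℝ) (hr : 0 < r) (x : Fin d → ℝ) (hx : ∀ i, |x i| ≤ r) :
    ∃ w : (Fin d → Bool) → ℝ, (∀ s, 0 ≤ w s) ∧ (∑ s, w s = 1) ∧
      (∑ s, w s • (fun i => if s i then r else -r : Fin d → ℝ)) = x := by
  set t : Fin d → ℝ := fun i => (x i + r) / (2 * r) with ht
  have ht0 : ∀ i, 0 ≤ t i := fun i => div_nonneg (by have := abs_le.1 (hx i); linarith) (by linarith)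
  have ht1 : ∀ i, t i ≤ 1 := fun i => by
    rw [div_le_one (by linarith)]; have := abs_le.1 (hx i); linarith
  refine ⟨fun s => ∏ i, (if s i then t i else 1 - t i), fun s => prod_nonneg fun i _ => ?_, ?_, ?_⟩
  · by_cases h : s i <;> simp [h, ht0 i] ; linarith [ht1 i]
  · rw [sum_prod_bool (fun i b => if b then t i else 1 - t i)]
    rw [show (1:ℝ) = ∏ i : Fin d, 1 by simp]
    exact Finset.prod_congr rfl fun i _ => by simp
  · funext j
    have key : ∀ s : Fin d → Bool,
        (∏ i, (if s i then t i else 1 - t i)) * (if s j then r else -r)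
          = ∏ i, ((if s i then t i else 1 - t i) * (if i = j then (if s i then r else -r) else 1)) := by
      intro s
      rw [Finset.prod_mul_distrib, Finset.prod_ite_eq' Finset.univ j
        (fun i => if s i then r else -r)]
      simp
    rw [Finset.sum_apply]
    simp only [Pi.smul_apply, smul_eq_mul]
    calc (∑ s : Fin d → Bool, (∏ i, (if s i then t i else 1 - t i)) * (if s j then r else -r))
        = ∑ s : Fin d → Bool, ∏ i, ((if s i then t i else 1 - t i) * (if i = j then (if s i then r else -r) else 1)) := by
          exact Finset.sum_congr rfl fun s _ => key s
      _ = ∏ i, ((t i * (if i = j then r else 1)) + ((1 - t i) * (if i = j then -r else 1))) := by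
          rw [sum_prod_bool (fun i b => (if b then t i else 1 - t i) * (if i = j then (if b then r else -r) else 1))]
          simp
      _ = x j := by
          rw [Finset.prod_eq_single j]
          · simp only [if_pos rfl, ht, if_true]; field_simp; ring
          · intro i _ hij; simp [hij]
          · simp
theorem convex_pointwise_to_uniform_on_compact (d : ℕ)
    (f : ℕ → (Fin d → ℝ) → ℝ) (g : (Fin d → ℝ) → ℝ)
    (hconv : ∀ n, ConvexOn ℝ Set.univ (f n))
    (hptwise : ∀ x, Tendsto (fun n => f n x) atTop (nhds (g x)))
    (K : Set (Fin d → ℝ)) (hK : IsCompact K) :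
    TendstoUniformlyOn f g atTop K := by
  -- bound K inside a closed ball
  obtain ⟨R, hR0, hKR⟩ : ∃ R : ℝ, 0 < R ∧ K ⊆ Metric.closedBall 0 R := by
    obtain ⟨R, hR⟩ := hK.isBounded.subset_closedBall 0
    exact ⟨max R 1, lt_of_lt_of_le one_pos (le_max_right _ _),
      hR.trans (Metric.closedBall_subset_closedBall (le_max_left _ _))⟩
  set r : ℝ := R + 2 with hrdef
  have hr : 0 < r := by positivity
  -- pointwise bounds
  have hbd : ∀ x : Fin d → ℝ, ∃ C, ∀ n, |f n x| ≤ C := by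
    intro x
    obtain ⟨N, hN⟩ := Metric.tendsto_atTop.1 (hptwise x) 1 one_pos
    refine ⟨max (|g x| + 1) ((Finset.range (N + 1)).sup' ⟨0, by simp⟩ fun n => |f n x|),
      fun n => ?_⟩
    rcases le_or_gt N n with h | h
    · have h1 : dist (f n x) (g x) < 1 := hN n h
      rw [Real.dist_eq] at h1
      have : |f n x| ≤ |g x| + 1 := by
        have := abs_sub_abs_le_abs_sub (f n x) (g x)
        linarith
      exact this.trans (le_max_left _ _)
    · exact (Finset.le_sup' (fun n => |f n x|) (Finset.mem_range.2 (by omega))).trans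
        (le_max_right _ _)
  -- vertices of the cube
  set v : (Fin d → Bool) → (Fin d → ℝ) := fun s i => if s i then r else -r with hv
  choose C hC using hbd
  set B : ℝ := max (C 0) (Finset.univ.sup' Finset.univ_nonempty fun s => C (v s)) with hB
  have hB0 : ∀ n, |f n 0| ≤ B := fun n => (hC 0 n).trans (le_max_left _ _)
  have hBv : ∀ s n, |f n (v s)| ≤ B := fun s n =>
    (hC (v s) n).trans ((Finset.le_sup' (fun s => C (v s)) (Finset.mem_univ s)).trans (le_max_right _ _))
  have hBnn : 0 ≤ B := le_trans (abs_nonneg _) (hB0 0)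
  -- uniform upper bound on the closed ball
  have hupper : ∀ n, ∀ x ∈ Metric.closedBall (0 : Fin d → ℝ) r, f n x ≤ B := by
    intro n x hx
    rw [Metric.mem_closedBall, dist_zero_right] at hx
    have hxi : ∀ i, |x i| ≤ r := fun i => by
      simpa using (norm_le_pi_norm x i).trans hx
    obtain ⟨w, hw0, hw1, hwx⟩ := cube_combo d r hr x hxi
    have hj := (hconv n).map_sum_le (t := Finset.univ) (w := w) (p := v)
      (fun s _ => hw0 s) (by simpa using hw1) (fun s _ => Set.mem_univ _)
    rw [show (∑ s : Fin d → Bool, w s • v s) = x from hwx] at hj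
    calc f n x ≤ ∑ s : Fin d → Bool, w s • f n (v s) := hj
      _ ≤ ∑ s : Fin d → Bool, w s * B := Finset.sum_le_sum fun s _ =>
          mul_le_mul_of_nonneg_left ((le_abs_self _).trans (hBv s n)) (hw0 s)
      _ = B := by rw [← Finset.sum_mul, hw1, one_mul]
  -- uniform absolute bound
  have habs : ∀ n, ∀ x ∈ Metric.closedBall (0 : Fin d → ℝ) r, |f n x| ≤ 3 * B := by
    intro n x hx
    have hnx : -x ∈ Metric.closedBall (0 : Fin d → ℝ) r := by
      rw [Metric.mem_closedBall, dist_zero_right, norm_neg]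
      rwa [Metric.mem_closedBall, dist_zero_right] at hx
    have hmid : f n 0 ≤ (1/2 : ℝ) * f n x + (1/2 : ℝ) * f n (-x) := by
      have h := (hconv n).2 (Set.mem_univ x) (Set.mem_univ (-x))
        (by norm_num : (0:ℝ) ≤ 1/2) (by norm_num : (0:ℝ) ≤ 1/2) (by norm_num)
      have h0 : (1/2 : ℝ) • x + (1/2 : ℝ) • (-x) = 0 := by module
      rw [h0] at h
      simpa [smul_eq_mul] using h
    have h1 : f n x ≤ B := hupper n x hx
    have h2 : f n (-x) ≤ B := hupper n (-x) hnx
    have h3 : -B ≤ f n 0 := neg_le_of_abs_le (hB0 n)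
    rw [abs_le]
    constructor <;> nlinarith
  -- equi-Lipschitz on ball 0 (r - 1)
  set L : NNReal := (2 * (3 * B) / 1).toNNReal with hL
  have hfL : ∀ n, LipschitzOnWith L (f n) (Metric.ball (0 : Fin d → ℝ) (r - 1)) := fun n =>
    ((hconv n).subset (Set.subset_univ _) (convex_ball _ _)).lipschitzOnWith_of_abs_le
      one_pos fun a ha => habs n a (Metric.ball_subset_closedBall ha)
  have hKball : K ⊆ Metric.ball (0 : Fin d → ℝ) (r - 1) := fun x hx =>
    (Metric.closedBall_subset_ball (by rw [hrdef]; linarith)) (hKR hx)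
  -- g is Lipschitz too
  have hgL : ∀ x ∈ Metric.ball (0 : Fin d → ℝ) (r - 1), ∀ y ∈ Metric.ball (0 : Fin d → ℝ) (r - 1),
      dist (g x) (g y) ≤ L * dist x y := fun x hx y hy =>
    le_of_tendsto ((hptwise x).dist (hptwise y))
      (Filter.Eventually.of_forall fun n => (hfL n).dist_le_mul x hx y hy)
  -- epsilon/3 argument
  rw [Metric.tendstoUniformlyOn_iff]
  intro ε hε
  set δ : ℝ := ε / (3 * (L + 1)) with hδdef
  have hL1 : (0:ℝ) < (L:ℝ) + 1 := by positivity
  have hδ : 0 < δ := by positivity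
  obtain ⟨T, hTK, hTfin, hTcov⟩ := hK.elim_finite_subcover_image
    (fun x (_ : x ∈ K) => Metric.isOpen_ball (x := x) (ε := δ))
    fun x hx => Set.mem_biUnion hx (Metric.mem_ball_self hδ)
  have hev : ∀ᶠ n in atTop, ∀ c ∈ T, dist (f n c) (g c) < ε / 3 := by
    rw [eventually_all_finite hTfin]
    intro c _
    have := (hptwise c).eventually (Metric.ball_mem_nhds (g c) (by positivity : (0:ℝ) < ε/3))
    simpa [Metric.mem_ball] using this
  have hLδ : (L : ℝ) * δ ≤ ε / 3 := by
    have h1 : (L:ℝ) * δ ≤ ((L:ℝ) + 1) * δ := mul_le_mul_of_nonneg_right (by linarith) hδ.le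
    have h2 : ((L:ℝ) + 1) * δ = ε / 3 := by
      rw [hδdef]; field_simp
    linarith
  filter_upwards [hev] with n hn x hxK
  obtain ⟨c, hcT, hxc⟩ : ∃ c ∈ T, x ∈ Metric.ball c δ := by simpa using hTcov hxK
  have hcK : c ∈ K := hTK hcT
  have hxb := hKball hxK
  have hcb := hKball hcK
  have hxcδ : dist x c < δ := hxc
  have d1 : dist (g x) (g c) ≤ ε / 3 := by
    have := hgL x hxb c hcb
    have hLe : (L:ℝ) * dist x c ≤ (L:ℝ) * δ :=
      mul_le_mul_of_nonneg_left hxcδ.le (L.coe_nonneg)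
    linarith
  have d2 : dist (g c) (f n c) < ε / 3 := by rw [dist_comm]; exact hn c hcT
  have d3 : dist (f n c) (f n x) ≤ ε / 3 := by
    have := (hfL n).dist_le_mul c hcb x hxb
    have hLe : (L:ℝ) * dist c x ≤ (L:ℝ) * δ :=
      mul_le_mul_of_nonneg_left (by rw [dist_comm]; exact hxcδ.le) (L.coe_nonneg)
    linarith
  calc dist (g x) (f n x) ≤ dist (g x) (g c) + dist (g c) (f n c) + dist (f n c) (f n x) :=
        dist_triangle4 _ _ _ _
    _ < ε / 3 + ε / 3 + ε / 3 := by
        apply add_lt_add_of_lt_of_le (add_lt_add_of_le_of_lt d1 d2) d3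
    _ = ε := by ring
end

section
/- Let K ⊆ ℝ^d be a nonempty compact convex set, f_n : K → ℝ random convex functions such that sup_{x∈K}|f_n(x) - f(x)| → 0 in probability, where f is strictly convex with minimizer x* in K. Then the (unique whenever it exists) minimizer x_n of f_n on K converges to x* in probability. -/
open MeasureTheory Filter

lemma key_det (d : ℕ) (K : Set (Fin d → ℝ)) (hK : IsCompact K) (hKconv : Convex ℝ K)
    (f : (Fin d → ℝ) → ℝ) (hf : ContinuousOn f K) (hfconv : StrictConvexOn ℝ K f)
    (xstar : Fin d → ℝ) (hxstar : xstar ∈ K) (hmin : ∀ y ∈ K, f xstar ≤ f y)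
    (ε : ℝ) (hε : 0 < ε) :
    ∃ δ > 0, ∀ g : (Fin d → ℝ) → ℝ, (∀ x ∈ K, |g x - f x| ≤ δ) →
      ∀ x0 ∈ K, (∀ y ∈ K, g x0 ≤ g y) → dist x0 xstar ≤ ε := by
  set S : Set (Fin d → ℝ) := K ∩ {y | ε ≤ dist y xstar} with hS
  have hScpt : IsCompact S := hK.inter_right
    (isClosed_le continuous_const (continuous_id.dist continuous_const))
  by_cases hSne : S.Nonempty
  · obtain ⟨y0, hy0S, hy0min⟩ := hScpt.exists_isMinOn hSne
      (hf.mono Set.inter_subset_left)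
    have hy0K : y0 ∈ K := hy0S.1
    have hy0ne : y0 ≠ xstar := by
      intro h
      have := hy0S.2
      rw [h] at this
      simp only [Set.mem_setOf_eq, dist_self] at this
      linarith
    have hmid : f xstar < f y0 := by
      have hz : (1/2 : ℝ) • xstar + (1/2 : ℝ) • y0 ∈ K :=
        hKconv hxstar hy0K (by norm_num) (by norm_num) (by norm_num)
      have h1 : f ((1/2 : ℝ) • xstar + (1/2 : ℝ) • y0)
          < (1/2 : ℝ) * f xstar + (1/2 : ℝ) * f y0 :=
        hfconv.2 hxstar hy0K (Ne.symm hy0ne) (by norm_num) (by norm_num) (by norm_num)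
      have h2 := hmin _ hz
      linarith
    set m := f y0 - f xstar with hm
    have hm0 : 0 < m := by simp [hm]; linarith
    refine ⟨m/3, by linarith, ?_⟩
    intro g hg x0 hx0 hgmin
    by_contra hlt
    push_neg at hlt
    have hx0S : x0 ∈ S := ⟨hx0, le_of_lt hlt⟩
    have h1 : f y0 ≤ f x0 := hy0min hx0S
    have h2 : |g x0 - f x0| ≤ m/3 := hg _ hx0
    have h3 : |g xstar - f xstar| ≤ m/3 := hg _ hxstar
    have h4 : g x0 ≤ g xstar := hgmin _ hxstar
    rw [abs_le] at h2 h3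
    linarith [h2.1, h2.2, h3.1, h3.2]
  · refine ⟨1, one_pos, ?_⟩
    intro g _ x0 hx0 _
    by_contra hlt
    push_neg at hlt
    exact hSne ⟨x0, hx0, le_of_lt hlt⟩

theorem random_argmin_converges_in_probability (d : ℕ)
    {Ω : Type*} [MeasurableSpace Ω] (μ : Measure Ω) [IsProbabilityMeasure μ]
    (K : Set (Fin d → ℝ)) (hKne : K.Nonempty) (hK : IsCompact K) (hKconv : Convex ℝ K)
    (f : (Fin d → ℝ) → ℝ) (hf : ContinuousOn f K) (hfconv : StrictConvexOn ℝ K f)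
    (xstar : Fin d → ℝ) (hxstar : xstar ∈ K) (hmin : ∀ y ∈ K, f xstar ≤ f y)
    (fn : ℕ → Ω → (Fin d → ℝ) → ℝ)
    (hfnconv : ∀ n ω, ConvexOn ℝ K (fn n ω))
    (hunif : ∀ ε > 0, Tendsto
      (fun n => (μ {ω | ∃ x ∈ K, ε < |fn n ω x - f x|}).toReal) atTop (nhds 0))
    (x : ℕ → Ω → (Fin d → ℝ))
    (hx : ∀ n ω, x n ω ∈ K ∧ ∀ y ∈ K, fn n ω (x n ω) ≤ fn n ω y) :
    ∀ ε > 0, Tendsto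
      (fun n => (μ {ω | ε < dist (x n ω) xstar}).toReal) atTop (nhds 0) := by
  intro ε hε
  obtain ⟨δ, hδ, hkey⟩ := key_det d K hK hKconv f hf hfconv xstar hxstar hmin ε hε
  have hsub : ∀ n, {ω | ε < dist (x n ω) xstar} ⊆
      {ω | ∃ y ∈ K, δ < |fn n ω y - f y|} := by
    intro n ω hω
    by_contra hnot
    simp only [Set.mem_setOf_eq, not_exists, not_and, not_lt] at hnot
    have := hkey (fn n ω) hnot (x n ω) (hx n ω).1 (hx n ω).2
    exact absurd hω (by simp only [Set.mem_setOf_eq]; linarith)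
  refine tendsto_of_tendsto_of_tendsto_of_le_of_le tendsto_const_nhds (hunif δ hδ)
    (fun n => ENNReal.toReal_nonneg) (fun n => ?_)
  exact ENNReal.toReal_mono (measure_ne_top μ _) (measure_mono (hsub n))
end

section
/- Let (p̂_n(P))_{P∈Π} and (p̂_n'(P))_{P∈Π} be two families of random variables, each converging in probability to the same constants p*(P), with p_0 ∉ {p*(P) : P ∈ Π} and {P : p*(P) > p_0} nonempty, where Π is finite. Then the Dice-Sorensen index between the random sets Ŝ_n = {P : p̂_n(P) > p_0} and Ŝ_n' = {P : p̂_n'(P) > p_0} converges to 1 in probability. -/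
open MeasureTheory Filter

/-- Dice-Sorensen index of two finite sets, with the convention that it equals 1
when both sets are empty. -/
noncomputable def diceIndex {α : Type*} [DecidableEq α] (A B : Finset α) : ℝ :=
  if A.card + B.card = 0 then 1
  else 2 * ((A ∩ B).card : ℝ) / (A.card + B.card)

open Classical in
theorem sirus_asymptotic_stability {Paths : Type*} [Fintype Paths] [DecidableEq Paths]
    {Ω : Type*} [MeasurableSpace Ω] (μ : Measure Ω) [IsProbabilityMeasure μ]
    (phat phat' : ℕ → Paths → Ω → ℝ) (pstar : Paths → ℝ) (p₀ : ℝ)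
    (hpstar : ∀ P, pstar P ∈ Set.Icc (0 : ℝ) 1)
    (hp₀ : p₀ ∈ Set.Icc (0 : ℝ) 1) (hne : ∀ P, pstar P ≠ p₀)
    (hnonempty : ∃ P, p₀ < pstar P)
    (hmeas : ∀ n P, Measurable (phat n P)) (hmeas' : ∀ n P, Measurable (phat' n P))
    (hconv : ∀ P, ∀ ε > 0, Tendsto
      (fun n => (μ {ω | ε < |phat n P ω - pstar P|}).toReal) atTop (nhds 0))
    (hconv' : ∀ P, ∀ ε > 0, Tendsto
      (fun n => (μ {ω | ε < |phat' n P ω - pstar P|}).toReal) atTop (nhds 0)) :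
    ∀ ε > 0, Tendsto
      (fun n => (μ {ω | ε <
        |diceIndex (Finset.univ.filter (fun P => p₀ < phat n P ω))
            (Finset.univ.filter (fun P => p₀ < phat' n P ω)) - 1|}).toReal)
      atTop (nhds 0) := by
  intro ε hε
  obtain ⟨P₀, hP₀⟩ := hnonempty
  have hPne : Nonempty Paths := ⟨P₀⟩
  set δ : ℝ := Finset.univ.inf' Finset.univ_nonempty (fun P => |pstar P - p₀|) with hδdef
  have hδpos : 0 < δ := by
    rw [hδdef, Finset.lt_inf'_iff]
    intro P _
    exact abs_pos.mpr (sub_ne_zero.mpr (hne P))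
  have hδle : ∀ P, δ ≤ |pstar P - p₀| := fun P =>
    Finset.inf'_le _ (Finset.mem_univ P)
  -- key: if all estimates are within δ/2, the dice index is 1
  have key : ∀ n (ω : Ω),
      (∀ P, |phat n P ω - pstar P| ≤ δ / 2) →
      (∀ P, |phat' n P ω - pstar P| ≤ δ / 2) →
      diceIndex (Finset.univ.filter (fun P => p₀ < phat n P ω))
        (Finset.univ.filter (fun P => p₀ < phat' n P ω)) = 1 := by
    intro n ω h h'
    have hsign : ∀ (P : Paths) (q : ℝ), |q - pstar P| ≤ δ / 2 → (p₀ < q ↔ p₀ < pstar P) := by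
      intro P q hq
      rcases (hne P).lt_or_gt with hlt | hlt
      · -- pstar P < p₀
        have h1 : δ ≤ p₀ - pstar P := by
          have := hδle P
          rw [abs_of_neg (by linarith : pstar P - p₀ < 0)] at this
          linarith
        have h2 : q - pstar P ≤ δ / 2 := (abs_le.mp hq).2
        constructor
        · intro hc; linarith
        · intro hc; linarith
      · -- p₀ < pstar P
        have h1 : δ ≤ pstar P - p₀ := by
          have := hδle P
          rwa [abs_of_pos (by linarith)] at this
        have h2 : -(δ / 2) ≤ q - pstar P := (abs_le.mp hq).1
        constructor
        · intro _; exact hlt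
        · intro _; linarith
    have hA : Finset.univ.filter (fun P => p₀ < phat n P ω)
        = Finset.univ.filter (fun P => p₀ < pstar P) := by
      apply Finset.filter_congr
      intro P _
      exact hsign P _ (h P)
    have hB : Finset.univ.filter (fun P => p₀ < phat' n P ω)
        = Finset.univ.filter (fun P => p₀ < pstar P) := by
      apply Finset.filter_congr
      intro P _
      exact hsign P _ (h' P)
    rw [hA, hB]
    set S := Finset.univ.filter (fun P => p₀ < pstar P) with hS
    have hScard : 0 < S.card := by
      apply Finset.card_pos.mpr
      exact ⟨P₀, by simp [hS, hP₀]⟩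
    have hScard' : (0 : ℝ) < S.card := by exact_mod_cast hScard
    rw [diceIndex, if_neg (by omega), Finset.inter_self]
    field_simp
    ring
  -- the bad event is contained in a union of deviation events
  have hsub : ∀ n, {ω | ε <
        |diceIndex (Finset.univ.filter (fun P => p₀ < phat n P ω))
            (Finset.univ.filter (fun P => p₀ < phat' n P ω)) - 1|}
      ⊆ ⋃ P : Paths, ({ω | δ / 2 < |phat n P ω - pstar P|}
          ∪ {ω | δ / 2 < |phat' n P ω - pstar P|}) := by
    intro n ω hω
    by_contra hc
    simp only [Set.mem_iUnion, Set.mem_union, Set.mem_setOf_eq, not_exists, not_or,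
      not_lt] at hc
    have := key n ω (fun P => (hc P).1) (fun P => (hc P).2)
    rw [Set.mem_setOf_eq, this] at hω
    simp at hω
    linarith
  -- squeeze
  have hbound : ∀ n, (μ {ω | ε <
        |diceIndex (Finset.univ.filter (fun P => p₀ < phat n P ω))
            (Finset.univ.filter (fun P => p₀ < phat' n P ω)) - 1|}).toReal
      ≤ ∑ P : Paths, ((μ {ω | δ / 2 < |phat n P ω - pstar P|}).toReal
          + (μ {ω | δ / 2 < |phat' n P ω - pstar P|}).toReal) := by
    intro n
    have h1 : μ {ω | ε <
        |diceIndex (Finset.univ.filter (fun P => p₀ < phat n P ω))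
            (Finset.univ.filter (fun P => p₀ < phat' n P ω)) - 1|}
        ≤ ∑ P : Paths, (μ {ω | δ / 2 < |phat n P ω - pstar P|}
            + μ {ω | δ / 2 < |phat' n P ω - pstar P|}) := by
      refine le_trans (measure_mono (hsub n)) ?_
      refine le_trans (measure_iUnion_fintype_le μ _) ?_
      exact Finset.sum_le_sum fun P _ => measure_union_le _ _
    refine le_trans (ENNReal.toReal_mono ?_ h1) (le_of_eq ?_)
    · exact (ENNReal.sum_lt_top.mpr fun P _ => ENNReal.add_lt_top.mpr
        ⟨measure_lt_top μ _, measure_lt_top μ _⟩).ne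
    · rw [ENNReal.toReal_sum (fun P _ => (ENNReal.add_lt_top.mpr
        ⟨measure_lt_top μ _, measure_lt_top μ _⟩).ne)]
      exact Finset.sum_congr rfl fun P _ =>
        ENNReal.toReal_add (measure_ne_top μ _) (measure_ne_top μ _)
  have hglim : Tendsto (fun n => ∑ P : Paths, ((μ {ω | δ / 2 < |phat n P ω - pstar P|}).toReal
          + (μ {ω | δ / 2 < |phat' n P ω - pstar P|}).toReal)) atTop (nhds 0) := by
    have : Tendsto (fun n => ∑ P : Paths, ((μ {ω | δ / 2 < |phat n P ω - pstar P|}).toReal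
          + (μ {ω | δ / 2 < |phat' n P ω - pstar P|}).toReal)) atTop
        (nhds (∑ _P : Paths, ((0 : ℝ) + 0))) := by
      apply tendsto_finset_sum
      intro P _
      exact (hconv P (δ / 2) (by linarith)).add (hconv' P (δ / 2) (by linarith))
    simpa using this
  exact squeeze_zero (fun n => ENNReal.toReal_nonneg) hbound hglim
end
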